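/- Suppose (x₀,y₀) ∈ ℝ² satisfies x₀ < 1 and y₀ ≤ 0 (so (x₀,y₀) is a real point of R₊ at which f is defined). Then (x₁,y₁) := f(x₀,y₀) is a point of ℝ² lying in R₊, i.e. x₁ ≤ 1 and y₁ ≤ 0, and moreover min{x₁ − 1, y₁} ≤ min{x₀ − 1, y₀} − 1. -/
import Mathlib


open Filter

/-- The birational map f(x,y) = (y(x+a)/(x-1), x+a-1). -/
noncomputable def birat (a : ℝ) (p : ℝ × ℝ) : ℝ × ℝ :=
  (p.2 * (p.1 + a) / (p.1 - 1), p.1 + a - 1)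

/-- The inverse map f⁻¹(x,y) = (y+1-a, x(y-a)/(y+1)). -/
noncomputable def biratInv (a : ℝ) (p : ℝ × ℝ) : ℝ × ℝ :=
  (p.2 + 1 - a, p.1 * (p.2 - a) / (p.2 + 1))

/-- The forward orbit of `p` is defined up to time `n`. -/
def orbitDefined (a : ℝ) (p : ℝ × ℝ) (n : ℕ) : Prop :=
  ∀ k < n, ((birat a)^[k] p).1 ≠ 1

def Rplus : Set (ℝ × ℝ) := {p | p.1 ≤ 1 ∧ p.2 ≤ 0}
def Rminus : Set (ℝ × ℝ) := {p | 0 ≤ p.1 ∧ -1 ≤ p.2}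
def Rzero : Set (ℝ × ℝ) := {p | 1 ≤ p.1 ∧ p.2 ≤ -1}
def Rone : Set (ℝ × ℝ) := {p | p.1 ≤ 0 ∧ 0 ≤ p.2}
def intRplus : Set (ℝ × ℝ) := {p | p.1 < 1 ∧ p.2 < 0}
def intRzero : Set (ℝ × ℝ) := {p | 1 < p.1 ∧ p.2 < -1}
def intRone : Set (ℝ × ℝ) := {p | p.1 < 0 ∧ 0 < p.2}

/-- `Rw 0 = R₀`, `Rw 1 = R₁`. -/
def Rw (i : Fin 2) : Set (ℝ × ℝ) := if i = 0 then Rzero else Rone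

/-- `intRw 0 = int R₀`, `intRw 1 = int R₁`. -/
def intRw (i : Fin 2) : Set (ℝ × ℝ) := if i = 0 then intRzero else intRone

/-- Euclidean distance on ℝ². -/
noncomputable def eucDist (p q : ℝ × ℝ) : ℝ :=
  Real.sqrt ((p.1 - q.1) ^ 2 + (p.2 - q.2) ^ 2)

theorem stmt0 (a : ℝ) (ha : a < -1) (x0 y0 : ℝ) (hx : x0 < 1) (hy : y0 ≤ 0) :
    (birat a (x0, y0)).1 ≤ 1 ∧ (birat a (x0, y0)).2 ≤ 0 ∧
    min ((birat a (x0, y0)).1 - 1) (birat a (x0, y0)).2 ≤ min (x0 - 1) y0 - 1 := by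
  simp only [birat]
  have hd : x0 - 1 < 0 := by linarith
  have h1 : y0 * (x0 + a) / (x0 - 1) ≤ y0 := by
    rw [div_le_iff_of_neg hd]; nlinarith
  refine ⟨by linarith, by linarith, ?_⟩
  have h2 : min (y0 * (x0 + a) / (x0 - 1) - 1) (x0 + a - 1) ≤ y0 - 1 :=
    le_trans (min_le_left _ _) (by linarith)
  have h3 : min (y0 * (x0 + a) / (x0 - 1) - 1) (x0 + a - 1) ≤ x0 - 2 :=
    le_trans (min_le_right _ _) (by linarith)
  rcases le_total (x0 - 1) y0 with h | h
  · rw [min_eq_left h]; linarith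
  · rw [min_eq_right h]; linarith
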